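/- For 0 < y ≤ x < 1, Appell's function F₁(1/2,{1/2,1/2},1; x, y) = (1/√(1−y)) · ₂F₁(1/2,1/2,1; (x−y)/(1−y)), where both sides are defined by their Euler integral representations: F₁ = (1/π)∫₀¹ du/√(u(1−u)(1−xu)(1−yu)) and ₂F₁(1/2,1/2,1;z) = (1/π)∫₀¹ du/√(u(1−u)(1−zu)). -/

import Mathlib

open intervalIntegral Real Set MeasureTheory

lemma sqrt_bound {u : ℝ} (hu0 : 0 < u) (hu1 : u ≤ 1) :
    1 / Real.sqrt (u * (1 - u)) ≤
      Real.sqrt 2 * (1 / Real.sqrt u + 1 / Real.sqrt (1 - u)) := by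
  have h1u : (0:ℝ) ≤ 1 - u := by linarith
  rw [Real.sqrt_mul hu0.le]
  rcases le_or_gt u (1/2) with hc | hc
  · have hb : 1 / Real.sqrt (1 - u) ≤ Real.sqrt 2 := by
      rw [div_le_iff₀ (Real.sqrt_pos.mpr (by linarith)), ← Real.sqrt_mul (by norm_num : (0:ℝ) ≤ 2)]
      calc (1:ℝ) = Real.sqrt 1 := Real.sqrt_one.symm
        _ ≤ _ := Real.sqrt_le_sqrt (by linarith)
    have h1 : 1 / (Real.sqrt u * Real.sqrt (1 - u))
        = (1 / Real.sqrt (1 - u)) * (1 / Real.sqrt u) := by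
      rw [one_div, one_div, one_div, mul_inv]; ring
    rw [h1]
    have h2 : (1 / Real.sqrt (1 - u)) * (1 / Real.sqrt u) ≤ Real.sqrt 2 * (1 / Real.sqrt u) :=
      mul_le_mul_of_nonneg_right hb (by positivity)
    have h3 : (0:ℝ) ≤ 1 / Real.sqrt (1 - u) := by positivity
    nlinarith [Real.sqrt_nonneg 2]
  · have hb : 1 / Real.sqrt u ≤ Real.sqrt 2 := by
      rw [div_le_iff₀ (Real.sqrt_pos.mpr hu0), ← Real.sqrt_mul (by norm_num : (0:ℝ) ≤ 2)]
      calc (1:ℝ) = Real.sqrt 1 := Real.sqrt_one.symm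
        _ ≤ _ := Real.sqrt_le_sqrt (by linarith)
    have h1 : 1 / (Real.sqrt u * Real.sqrt (1 - u))
        = (1 / Real.sqrt u) * (1 / Real.sqrt (1 - u)) := by
      rw [one_div, one_div, one_div, mul_inv]
    rw [h1]
    have h2 : (1 / Real.sqrt u) * (1 / Real.sqrt (1 - u)) ≤ Real.sqrt 2 * (1 / Real.sqrt (1 - u)) :=
      mul_le_mul_of_nonneg_right hb (by positivity)
    have h3 : (0:ℝ) ≤ 1 / Real.sqrt u := by positivity
    nlinarith [Real.sqrt_nonneg 2]

lemma base_int : IntervalIntegrable (fun u : ℝ => 1 / Real.sqrt (u * (1 - u))) volume 0 1 := by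
  have h1 : IntervalIntegrable (fun u : ℝ => u ^ (-(1/2) : ℝ)) volume 0 1 :=
    intervalIntegrable_rpow' (by norm_num)
  have h2 : IntervalIntegrable (fun u : ℝ => (1 - u) ^ (-(1/2) : ℝ)) volume 0 1 := by
    have h := (intervalIntegrable_rpow' (r := -(1/2)) (by norm_num) (a := 0) (b := 1)).comp_sub_left 1
    simp only [sub_zero, sub_self] at h
    exact h.symm
  have hg : IntervalIntegrable
      (fun u : ℝ => Real.sqrt 2 * (u ^ (-(1/2) : ℝ) + (1 - u) ^ (-(1/2) : ℝ))) volume 0 1 :=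
    (h1.add h2).const_mul _
  refine hg.mono_fun ?_ ?_
  · exact ((Measurable.sqrt (by fun_prop)).const_div 1).aestronglyMeasurable
  · filter_upwards [ae_restrict_mem measurableSet_uIoc] with u hu
    rw [uIoc_of_le (by norm_num : (0:ℝ) ≤ 1)] at hu
    obtain ⟨hu0, hu1⟩ := hu
    have h1u : (0:ℝ) ≤ 1 - u := by linarith
    have hru : u ^ (-(1/2) : ℝ) = 1 / Real.sqrt u := by
      rw [Real.rpow_neg hu0.le, Real.sqrt_eq_rpow, one_div]
      norm_num
    have hr1u : (1 - u) ^ (-(1/2) : ℝ) = 1 / Real.sqrt (1 - u) := by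
      rw [Real.rpow_neg h1u, Real.sqrt_eq_rpow, one_div]
      norm_num
    simp only [Real.norm_eq_abs, hru, hr1u]
    rw [abs_of_nonneg (by positivity), abs_of_nonneg (by positivity)]
    exact sqrt_bound hu0 hu1

lemma int_aux {c : ℝ} (f : ℝ → ℝ) (hm : Measurable f)
    (hb : ∀ u ∈ Ioc (0:ℝ) 1, |f u| ≤ c * (1 / Real.sqrt (u * (1 - u)))) :
    IntervalIntegrable f volume 0 1 := by
  refine (base_int.const_mul c).mono_fun hm.aestronglyMeasurable ?_
  filter_upwards [ae_restrict_mem measurableSet_uIoc] with u hu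
  rw [uIoc_of_le (by norm_num : (0:ℝ) ≤ 1)] at hu
  have h := hb u hu
  have h0 : (0:ℝ) ≤ 1 / Real.sqrt (u * (1 - u)) := by positivity
  calc ‖f u‖ = |f u| := rfl
    _ ≤ c * (1 / Real.sqrt (u * (1 - u))) := h
    _ ≤ ‖c * (1 / Real.sqrt (u * (1 - u)))‖ := le_abs_self _

lemma int_g {z : ℝ} (hz0 : 0 ≤ z) (hz1 : z < 1) :
    IntervalIntegrable (fun u : ℝ => 1 / Real.sqrt (u * (1 - u) * (1 - z * u))) volume 0 1 := by
  refine int_aux (c := 1 / Real.sqrt (1 - z)) _ (by fun_prop) ?_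
  intro u hu
  obtain ⟨hu0, hu1⟩ := hu
  have h1zu : Real.sqrt (1 - z) ≤ Real.sqrt (1 - z * u) :=
    Real.sqrt_le_sqrt (by nlinarith)
  have hz' : 0 < Real.sqrt (1 - z) := Real.sqrt_pos.mpr (by linarith)
  rw [abs_of_nonneg (by positivity), Real.sqrt_mul (by nlinarith : (0:ℝ) ≤ u * (1 - u))]
  rcases eq_or_lt_of_le hu1 with h1 | h1
  · subst h1; simp
  · have hA : 0 < Real.sqrt (u * (1 - u)) := Real.sqrt_pos.mpr (by nlinarith)
    rw [div_mul_div_comm, one_mul]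
    apply one_div_le_one_div_of_le (by positivity)
    calc Real.sqrt (1 - z) * Real.sqrt (u * (1 - u))
        ≤ Real.sqrt (1 - z * u) * Real.sqrt (u * (1 - u)) :=
          mul_le_mul_of_nonneg_right h1zu hA.le
      _ = Real.sqrt (u * (1 - u)) * Real.sqrt (1 - z * u) := mul_comm _ _

lemma int_f {x y : ℝ} (hy : 0 < y) (hyx : y ≤ x) (hx1 : x < 1) :
    IntervalIntegrable
      (fun u : ℝ => 1 / Real.sqrt (u * (1 - u) * (1 - x * u) * (1 - y * u))) volume 0 1 := by
  refine int_aux (c := 1 / Real.sqrt ((1 - x) * (1 - y))) _ (by fun_prop) ?_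
  intro u hu
  obtain ⟨hu0, hu1⟩ := hu
  have hxy : 0 < (1 - x) * (1 - y) := by nlinarith
  have hle : Real.sqrt ((1 - x) * (1 - y)) ≤ Real.sqrt ((1 - x * u) * (1 - y * u)) := by
    have hxx : 1 - x ≤ 1 - x * u := by nlinarith
    have hyy : 1 - y ≤ 1 - y * u := by nlinarith
    exact Real.sqrt_le_sqrt (mul_le_mul hxx hyy (by linarith) (by linarith))
  have hz' : 0 < Real.sqrt ((1 - x) * (1 - y)) := Real.sqrt_pos.mpr hxy
  have hrw : u * (1 - u) * (1 - x * u) * (1 - y * u)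
      = (u * (1 - u)) * ((1 - x * u) * (1 - y * u)) := by ring
  rw [abs_of_nonneg (by positivity), hrw,
    Real.sqrt_mul (by nlinarith : (0:ℝ) ≤ u * (1 - u))]
  rcases eq_or_lt_of_le hu1 with h1 | h1
  · subst h1; simp
  · have hA : 0 < Real.sqrt (u * (1 - u)) := Real.sqrt_pos.mpr (by nlinarith)
    rw [div_mul_div_comm, one_mul]
    apply one_div_le_one_div_of_le (by positivity)
    calc Real.sqrt ((1 - x) * (1 - y)) * Real.sqrt (u * (1 - u))
        ≤ Real.sqrt ((1 - x * u) * (1 - y * u)) * Real.sqrt (u * (1 - u)) :=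
          mul_le_mul_of_nonneg_right hle hA.le
      _ = Real.sqrt (u * (1 - u)) * Real.sqrt ((1 - x * u) * (1 - y * u)) := mul_comm _ _

lemma key_eq {x y : ℝ} (hy : 0 < y) (hyx : y ≤ x) (hx1 : x < 1) {u : ℝ}
    (hu : u ∈ Icc (0:ℝ) 1) :
    ((1 - y) / (1 - y * u) ^ 2) *
        (1 / Real.sqrt ((1 - y) * u / (1 - y * u) * (1 - (1 - y) * u / (1 - y * u)) *
          (1 - ((x - y) / (1 - y)) * ((1 - y) * u / (1 - y * u)))))
      = Real.sqrt (1 - y) * (1 / Real.sqrt (u * (1 - u) * (1 - x * u) * (1 - y * u))) := by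
  obtain ⟨hu0, hu1⟩ := hu
  have he : 0 < 1 - y := by linarith
  have hd : 0 < 1 - y * u := by nlinarith
  rcases eq_or_lt_of_le hu0 with h0 | h0
  · subst h0; simp
  rcases eq_or_lt_of_le hu1 with h1 | h1
  · subst h1
    have hV : (1 - y) * 1 / (1 - y * 1) = 1 := by
      rw [mul_one, mul_one, div_self (by linarith)]
    rw [hV]
    norm_num
  -- interior case
  have hxu : 0 < 1 - x * u := by nlinarith
  have h1u : (0:ℝ) < 1 - u := by linarith
  have hV0 : 0 < (1 - y) * u / (1 - y * u) := div_pos (mul_pos he h0) hd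
  have hV1 : (1 - y) * u / (1 - y * u) < 1 := by
    rw [div_lt_one hd]; nlinarith
  have hz0 : 0 ≤ (x - y) / (1 - y) := div_nonneg (by linarith) he.le
  have hz1 : (x - y) / (1 - y) < 1 := by rw [div_lt_one he]; linarith
  set V := (1 - y) * u / (1 - y * u) with hVdef
  have hzV : 0 < 1 - ((x - y) / (1 - y)) * V := by nlinarith
  have hA0 : 0 < V * (1 - V) * (1 - ((x - y) / (1 - y)) * V) :=
    mul_pos (mul_pos hV0 (by linarith)) hzV
  have hB0 : 0 < u * (1 - u) * (1 - x * u) * (1 - y * u) :=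
    mul_pos (mul_pos (mul_pos h0 h1u) hxu) hd
  have hL0 : 0 ≤ ((1 - y) / (1 - y * u) ^ 2) * (1 / Real.sqrt (V * (1 - V) *
      (1 - ((x - y) / (1 - y)) * V))) :=
    mul_nonneg (div_nonneg he.le (sq_nonneg _)) (by positivity)
  have hR0 : 0 ≤ Real.sqrt (1 - y) *
      (1 / Real.sqrt (u * (1 - u) * (1 - x * u) * (1 - y * u))) :=
    mul_nonneg (Real.sqrt_nonneg _) (by positivity)
  refine (sq_eq_sq₀ hL0 hR0).mp ?_
  simp only [mul_pow, div_pow, one_pow]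
  rw [Real.sq_sqrt hA0.le, Real.sq_sqrt hB0.le, Real.sq_sqrt he.le]
  have hAval : V * (1 - V) * (1 - ((x - y) / (1 - y)) * V)
      = (1 - y) * (u * (1 - u) * (1 - x * u)) / (1 - y * u) ^ 3 := by
    rw [hVdef]; field_simp; ring
  rw [hAval]
  field_simp

theorem stmt_8 (x y : ℝ) (hy : 0 < y) (hyx : y ≤ x) (hx1 : x < 1) :
    (1 / π) * ∫ u in (0:ℝ)..1,
        1 / Real.sqrt (u * (1 - u) * (1 - x * u) * (1 - y * u))
      = (1 / Real.sqrt (1 - y)) * ((1 / π) * ∫ u in (0:ℝ)..1,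
          1 / Real.sqrt (u * (1 - u) * (1 - ((x - y) / (1 - y)) * u))) := by
  have he : 0 < 1 - y := by linarith
  have hz0 : 0 ≤ (x - y) / (1 - y) := div_nonneg (by linarith) he.le
  have hz1 : (x - y) / (1 - y) < 1 := by rw [div_lt_one he]; linarith
  have hd : ∀ u ∈ Icc (0:ℝ) 1, 0 < 1 - y * u := by
    intro u hu; nlinarith [hu.1, hu.2]
  set φ : ℝ → ℝ := fun u => (1 - y) * u / (1 - y * u) with hφ
  have hmem : ∀ u ∈ Icc (0:ℝ) 1, φ u ∈ Icc (0:ℝ) 1 := by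
    intro u hu
    have hdu := hd u hu
    constructor
    · exact div_nonneg (mul_nonneg he.le hu.1) hdu.le
    · rw [div_le_one hdu]; nlinarith [hu.1, hu.2]
  have hmemo : ∀ u ∈ Ioo (0:ℝ) 1, φ u ∈ Ioo (0:ℝ) 1 := by
    intro u hu
    have hdu := hd u ⟨hu.1.le, hu.2.le⟩
    constructor
    · exact div_pos (mul_pos he hu.1) hdu
    · rw [div_lt_one hdu]; nlinarith [hu.1, hu.2]
  have hcontφ : ContinuousOn φ (Set.uIcc (0:ℝ) 1) := by
    rw [Set.uIcc_of_le (by norm_num : (0:ℝ) ≤ 1)]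
    apply ContinuousOn.div (by fun_prop) (by fun_prop)
    intro u hu; exact (hd u hu).ne'
  have hderiv : ∀ u ∈ Set.Ioo (min (0:ℝ) 1) (max (0:ℝ) 1),
      HasDerivWithinAt φ ((1 - y) / (1 - y * u) ^ 2) (Set.Ioi u) u := by
    simp only [min_eq_left (by norm_num : (0:ℝ) ≤ 1), max_eq_right (by norm_num : (0:ℝ) ≤ 1)]
    intro u hu
    have hdu := hd u ⟨hu.1.le, hu.2.le⟩
    have h1 : HasDerivAt (fun u : ℝ => (1 - y) * u) ((1 - y) * 1) u :=
      (hasDerivAt_id u).const_mul (1 - y)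
    have h2 : HasDerivAt (fun u : ℝ => 1 - y * u) (0 - y * 1) u :=
      (hasDerivAt_const u 1).sub ((hasDerivAt_id u).const_mul y)
    have h3 := h1.div h2 hdu.ne'
    have h4 : ((1 - y) * 1 * (1 - y * u) - (1 - y) * u * (0 - y * 1)) / (1 - y * u) ^ 2
        = (1 - y) / (1 - y * u) ^ 2 := by
      rw [div_eq_div_iff (by positivity) (by positivity)]; ring
    rw [h4] at h3
    exact h3.hasDerivWithinAt
  set g : ℝ → ℝ := fun v => 1 / Real.sqrt (v * (1 - v) * (1 - ((x - y) / (1 - y)) * v)) with hg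
  have hgcont : ContinuousOn g (φ '' Set.Ioo (min (0:ℝ) 1) (max (0:ℝ) 1)) := by
    simp only [min_eq_left (by norm_num : (0:ℝ) ≤ 1), max_eq_right (by norm_num : (0:ℝ) ≤ 1)]
    have hsub : φ '' Set.Ioo (0:ℝ) 1 ⊆ Set.Ioo (0:ℝ) 1 := by
      rintro v ⟨u, hu, rfl⟩; exact hmemo u hu
    refine ContinuousOn.mono ?_ hsub
    apply ContinuousOn.div continuousOn_const (Continuous.continuousOn (by fun_prop))
    intro v hv
    refine (Real.sqrt_pos.mpr ?_).ne'
    have h1 : 0 < 1 - ((x - y) / (1 - y)) * v := by nlinarith [hv.1, hv.2]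
    exact mul_pos (mul_pos hv.1 (by linarith [hv.2])) h1
  have hg1 : MeasureTheory.IntegrableOn g (φ '' Set.uIcc (0:ℝ) 1) := by
    have hint : MeasureTheory.IntegrableOn g (Set.uIcc (0:ℝ) 1) := by
      rw [← intervalIntegrable_iff']; exact int_g hz0 hz1
    refine hint.mono_set ?_
    rintro v ⟨u, hu, rfl⟩
    simp only [Set.uIcc_of_le (by norm_num : (0:ℝ) ≤ 1)] at hu ⊢
    exact hmem u hu
  have hkey : ∀ u ∈ Set.Icc (0:ℝ) 1,
      ((1 - y) / (1 - y * u) ^ 2) • (g ∘ φ) u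
        = Real.sqrt (1 - y) * (1 / Real.sqrt (u * (1 - u) * (1 - x * u) * (1 - y * u))) := by
    intro u hu
    simpa [hg, hφ, smul_eq_mul, Function.comp] using key_eq hy hyx hx1 hu
  have hintf := int_f hy hyx hx1
  have hg2 : MeasureTheory.IntegrableOn
      (fun u => ((1 - y) / (1 - y * u) ^ 2) • (g ∘ φ) u) (Set.uIcc (0:ℝ) 1) := by
    rw [Set.uIcc_of_le (by norm_num : (0:ℝ) ≤ 1)]
    have hint : MeasureTheory.IntegrableOn
        (fun u => Real.sqrt (1 - y) *
          (1 / Real.sqrt (u * (1 - u) * (1 - x * u) * (1 - y * u)))) (Set.Icc (0:ℝ) 1) := by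
      have := (hintf.const_mul (Real.sqrt (1 - y)))
      rw [intervalIntegrable_iff', Set.uIcc_of_le (by norm_num : (0:ℝ) ≤ 1)] at this
      exact this
    exact hint.congr_fun (fun u hu => (hkey u hu).symm) measurableSet_Icc
  have hsub := integral_comp_smul_deriv''' hcontφ hderiv hgcont hg1 hg2
  have hφ0 : φ 0 = 0 := by simp [hφ]
  have hφ1 : φ 1 = 1 := by
    simp only [hφ, mul_one]
    exact div_self he.ne'
  rw [hφ0, hφ1] at hsub
  have hLHS : (∫ u in (0:ℝ)..1, ((1 - y) / (1 - y * u) ^ 2) • (g ∘ φ) u)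
      = Real.sqrt (1 - y) * ∫ u in (0:ℝ)..1,
          1 / Real.sqrt (u * (1 - u) * (1 - x * u) * (1 - y * u)) := by
    have hcongr : Set.EqOn (fun u => ((1 - y) / (1 - y * u) ^ 2) • (g ∘ φ) u)
        (fun u => Real.sqrt (1 - y) *
          (1 / Real.sqrt (u * (1 - u) * (1 - x * u) * (1 - y * u)))) (Set.uIcc (0:ℝ) 1) := by
      intro u hu
      exact hkey u (by rwa [Set.uIcc_of_le (by norm_num : (0:ℝ) ≤ 1)] at hu)
    rw [intervalIntegral.integral_congr hcongr]
    exact intervalIntegral.integral_const_mul _ _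
  rw [hLHS] at hsub
  have hsq : Real.sqrt (1 - y) ≠ 0 := (Real.sqrt_pos.mpr he).ne'
  rw [← hsub]
  field_simp
  refine intervalIntegral.integral_congr (fun u _ => ?_)
  ring_nf
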